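/- Let p be a prime, d ≥ 1, and let f be an irreducible element of R_{d,p} with |S(f)| ≥ 2. Then the support S(f) is a non-mixing shape for the algebraic ℤ^d-action α_f associated to R_{d,p}/⟨f⟩; consequently S(α_f) ≤ |S(f)| − 1. -/

import Mathlib

open MeasureTheory Filter Topology

noncomputable section

/-- The Laurent polynomial ring `R_{d,p} = 𝔽_p[u_1^{±1},…,u_d^{±1}]`,
realized as the group algebra of `ℤ^d` over `𝔽_p`. -/
abbrev Rdp (p d : ℕ) : Type := AddMonoidAlgebra (ZMod p) (Fin d → ℤ)

/-- The monomial `u^n` in `R_{d,p}`. -/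
def mono (p : ℕ) {d : ℕ} (n : Fin d → ℤ) : Rdp p d :=
  AddMonoidAlgebra.single n 1

/-- A sequence of `r`-tuples of vectors in `ℤ^d` moves apart if all pairwise
differences tend to infinity in norm. -/
def MovesApart {d r : ℕ} (n : ℕ → Fin r → (Fin d → ℤ)) : Prop :=
  ∀ s t : Fin r, s ≠ t → Tendsto (fun j => ‖n j s - n j t‖) atTop atTop

/-- A `ℤ^d`-action `α` on a measure space is mixing of order `r` (`r`-mixing). -/
def IsMixingOfOrder {X : Type*} [MeasurableSpace X] {d : ℕ}
    (μ : Measure X) (α : (Fin d → ℤ) → X → X) (r : ℕ) : Prop :=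
  ∀ n : ℕ → Fin r → (Fin d → ℤ), MovesApart n →
    ∀ A : Fin r → Set X, (∀ i, MeasurableSet (A i)) →
      Tendsto (fun j => μ (⋂ i, α (n j i) ⁻¹' A i)) atTop (𝓝 (∏ i, μ (A i)))

/-- The order of mixing `M(α)`: the supremum of all `r` for which `α` is `r`-mixing. -/
def mixingOrder {X : Type*} [MeasurableSpace X] {d : ℕ}
    (μ : Measure X) (α : (Fin d → ℤ) → X → X) : ℕ∞ :=
  sSup ((↑) '' {r : ℕ | IsMixingOfOrder μ α r})

/-- The finite set `{n 0, …, n (r-1)}` (enumerated injectively) is a mixing shape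
for `α`. -/
def IsMixingShape {X : Type*} [MeasurableSpace X] {d : ℕ}
    (μ : Measure X) (α : (Fin d → ℤ) → X → X) {r : ℕ}
    (n : Fin r → (Fin d → ℤ)) : Prop :=
  ∀ A : Fin r → Set X, (∀ i, MeasurableSet (A i)) →
    Tendsto (fun k : ℕ => μ (⋂ i, α ((k : ℤ) • n i) ⁻¹' A i)) atTop (𝓝 (∏ i, μ (A i)))

/-- The shape order of mixing `S(α)`: the supremum of all `r` such that every
`r`-element subset of `ℤ^d` is a mixing shape for `α`. -/
def shapeMixingOrder {X : Type*} [MeasurableSpace X] {d : ℕ}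
    (μ : Measure X) (α : (Fin d → ℤ) → X → X) : ℕ∞ :=
  sSup ((↑) '' {r : ℕ | ∀ n : Fin r → (Fin d → ℤ), Function.Injective n →
    IsMixingShape μ α n})

instance (p : ℕ) : TopologicalSpace (ZMod p) := ⊥
instance (p : ℕ) : DiscreteTopology (ZMod p) := ⟨rfl⟩

/-- The Pontryagin dual of `R_{d,p}/⟨f⟩`, realized concretely as the closed
shift-invariant subgroup of `(𝔽_p)^{ℤ^d}` consisting of the configurations
annihilated by `f`. -/
def XfGroup {p d : ℕ} (f : Rdp p d) : AddSubgroup ((Fin d → ℤ) → ZMod p) where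
  carrier := {x | ∀ m : Fin d → ℤ, ∑ n ∈ f.coeff.support, f.coeff n * x (m + n) = 0}
  zero_mem' := by simp
  add_mem' := by
    intro x y hx hy m
    simp only [Pi.add_apply, mul_add, Finset.sum_add_distrib]
    rw [hx m, hy m, add_zero]
  neg_mem' := by
    intro x hx m
    simp only [Pi.neg_apply, mul_neg]
    rw [Finset.sum_neg_distrib, hx m, neg_zero]

/-- The compact abelian group `X_f` dual to the discrete group `R_{d,p}/⟨f⟩`. -/
abbrev Xf {p d : ℕ} (f : Rdp p d) : Type := ↥(XfGroup f)

instance {p d : ℕ} (f : Rdp p d) [Fact p.Prime] : CompactSpace (Xf f) := by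
  have h : IsClosed (XfGroup f : Set ((Fin d → ℤ) → ZMod p)) := by
    have : (XfGroup f : Set ((Fin d → ℤ) → ZMod p)) =
        ⋂ m : Fin d → ℤ, (fun x : (Fin d → ℤ) → ZMod p =>
          ∑ n ∈ f.coeff.support, f.coeff n * x (m + n)) ⁻¹' {0} := by
      ext x
      simp [XfGroup, Set.mem_iInter]
    rw [this]
    exact isClosed_iInter fun m => IsClosed.preimage
      (continuous_finset_sum _ fun n _ =>
        Continuous.comp continuous_of_discreteTopology (continuous_apply (m + n)))
      isClosed_singleton
  exact isCompact_iff_compactSpace.mp h.isCompact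

instance {p d : ℕ} (f : Rdp p d) : MeasurableSpace (Xf f) := borel _
instance {p d : ℕ} (f : Rdp p d) : BorelSpace (Xf f) := ⟨rfl⟩

/-- The algebraic `ℤ^d`-action `α_f` on `X_f`: the shift action, in which `α_f^k`
is dual to multiplication by the monomial `u^k` on `R_{d,p}/⟨f⟩`. -/
def shiftAction {p d : ℕ} (f : Rdp p d) (k : Fin d → ℤ) (x : Xf f) : Xf f :=
  ⟨fun m => x.1 (m + k), by
    intro m
    have := x.2 (m + k)
    simpa [add_right_comm] using this⟩

set_option synthInstance.maxHeartbeats 1600000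
set_option maxHeartbeats 3200000

namespace NonMixAux

variable {p d : ℕ} [Fact p.Prime]

instance : CharP (Rdp p d) p :=
  charP_of_injective_algebraMap' (ZMod p) p

instance : IsTopologicalAddGroup (ZMod p) where
  continuous_add := continuous_of_discreteTopology
  continuous_neg := continuous_of_discreteTopology

/-- Pairing: `pairT x m q = ∑_n q(n) * x(m+n)`. -/
def pairT (x : (Fin d → ℤ) → ZMod p) (m : Fin d → ℤ) : Rdp p d →+ ZMod p :=
  (Finsupp.liftAddHom fun n => AddMonoidHom.mulRight (x (m + n))).comp
    AddMonoidAlgebra.coeffAddEquiv.toAddMonoidHom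

lemma pairT_single (x : (Fin d → ℤ) → ZMod p) (m n : Fin d → ℤ) (c : ZMod p) :
    pairT x m (AddMonoidAlgebra.single n c) = c * x (m + n) :=
  Finsupp.liftAddHom_apply_single _ _ _

lemma pairT_apply (x : (Fin d → ℤ) → ZMod p) (m : Fin d → ℤ) (q : Rdp p d) :
    pairT x m q = ∑ n ∈ q.coeff.support, q.coeff n * x (m + n) :=
  Finsupp.liftAddHom_apply _ _

lemma pairT_mul (x : (Fin d → ℤ) → ZMod p) (g f₀ : Rdp p d)
    (hx : ∀ m, pairT x m f₀ = 0) (m : Fin d → ℤ) :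
    pairT x m (g * f₀) = 0 := by
  rw [AddMonoidAlgebra.mul_def, map_finsuppSum]
  rw [Finsupp.sum]
  refine Finset.sum_eq_zero fun n hn => ?_
  rw [map_finsuppSum, Finsupp.sum]
  have : ∀ n' ∈ f₀.coeff.support,
      pairT x m (AddMonoidAlgebra.single (n + n') (g.coeff n * f₀.coeff n')) =
        g.coeff n * (f₀.coeff n' * x ((m + n) + n')) := by
    intro n' _
    rw [pairT_single, mul_assoc]
    ring_nf
  rw [Finset.sum_congr rfl this, ← Finset.mul_sum]
  have h0 := hx (m + n)
  rw [pairT_apply] at h0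
  rw [h0, mul_zero]

lemma pow_p_pow (f : Rdp p d) (j : ℕ) :
    f ^ (p ^ j) = ∑ n ∈ f.coeff.support, AddMonoidAlgebra.single ((p ^ j) • n) (f.coeff n) := by
  induction j with
  | zero =>
      simp only [pow_zero, pow_one, one_smul]
      exact (AddMonoidAlgebra.sum_coeff_single f).symm
  | succ j ih =>
      rw [pow_succ, pow_mul, ih, sum_pow_char]
      refine Finset.sum_congr rfl fun n hn => ?_
      rw [AddMonoidAlgebra.single_pow, ZMod.pow_card, smul_smul, mul_comm p (p ^ j)]

lemma key_rel (f : Rdp p d) (x : (Fin d → ℤ) → ZMod p)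
    (hx : ∀ m, ∑ n ∈ f.coeff.support, f.coeff n * x (m + n) = 0) (j : ℕ) (m : Fin d → ℤ) :
    ∑ n ∈ f.coeff.support, f.coeff n * x (m + (p ^ j) • n) = 0 := by
  have hx' : ∀ m, pairT x m f = 0 := fun m => by rw [pairT_apply]; exact hx m
  have h1 : pairT x m (f ^ (p ^ j)) = 0 := by
    have hppos : 1 ≤ p ^ j := Nat.one_le_pow _ _ (Fact.out : p.Prime).pos
    have : f ^ (p ^ j) = f ^ (p ^ j - 1) * f := by
      rw [← pow_succ, Nat.sub_add_cancel hppos]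
    rw [this]
    exact pairT_mul x _ f hx' m
  rw [pow_p_pow, map_sum] at h1
  calc ∑ n ∈ f.coeff.support, f.coeff n * x (m + (p ^ j) • n)
      = ∑ n ∈ f.coeff.support, pairT x m (AddMonoidAlgebra.single ((p ^ j) • n) (f.coeff n)) := by
        refine Finset.sum_congr rfl fun n hn => ?_
        rw [pairT_single]
    _ = 0 := h1

lemma single_mul_eq (f : Rdp p d) (m : Fin d → ℤ) :
    AddMonoidAlgebra.single m (1 : ZMod p) * f
      = ∑ n ∈ f.coeff.support, AddMonoidAlgebra.single (m + n) (f.coeff n) := by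
  conv_lhs => rw [← AddMonoidAlgebra.sum_coeff_single f]
  rw [Finsupp.sum, Finset.mul_sum]
  exact Finset.sum_congr rfl fun n _ => by
    rw [AddMonoidAlgebra.single_mul_single, one_mul]

lemma exists_one_elem (f : Rdp p d) (hnu : ¬ IsUnit f) :
    ∃ x : Xf f, x.1 0 = 1 := by
  set I := Ideal.span {f} with hI
  set mk := Ideal.Quotient.mkₐ (ZMod p) I with hmk
  have hvne : (1 : Rdp p d ⧸ I) ≠ 0 := by
    intro h
    rw [← map_one (Ideal.Quotient.mk I), Ideal.Quotient.eq_zero_iff_mem, hI,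
      Ideal.mem_span_singleton] at h
    exact hnu (isUnit_of_dvd_one h)
  obtain ⟨χ, hg⟩ := (LinearMap.toSpanSingleton (ZMod p) (Rdp p d ⧸ I)
      (1 : Rdp p d ⧸ I)).exists_leftInverse_of_injective
    (LinearMap.ker_toSpanSingleton (ZMod p) hvne)
  have hχ : χ (1 : Rdp p d ⧸ I) = 1 := by
    have := LinearMap.congr_fun hg 1
    simpa [LinearMap.toSpanSingleton_apply_one] using this
  refine ⟨⟨fun n => χ (mk (AddMonoidAlgebra.single n 1)), ?_⟩, ?_⟩
  · intro m
    have h1 : ∀ n : Fin d → ℤ, ∀ c : ZMod p,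
        c * χ (mk (AddMonoidAlgebra.single n 1)) = χ (mk (AddMonoidAlgebra.single n c)) := by
      intro n c
      rw [← smul_eq_mul, ← map_smul χ, ← map_smul mk, AddMonoidAlgebra.smul_single, smul_eq_mul, mul_one]
    calc ∑ n ∈ f.coeff.support, f.coeff n * χ (mk (AddMonoidAlgebra.single (m + n) 1))
        = χ (mk (∑ n ∈ f.coeff.support, AddMonoidAlgebra.single (m + n) (f.coeff n))) := by
          rw [map_sum mk, map_sum χ]
          exact Finset.sum_congr rfl fun n _ => h1 _ _
      _ = 0 := by
          rw [← single_mul_eq]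
          have : AddMonoidAlgebra.single m (1 : ZMod p) * f ∈ I :=
            Ideal.mem_span_singleton.mpr (dvd_mul_left f _)
          rw [hmk, Ideal.Quotient.mkₐ_eq_mk, (Ideal.Quotient.eq_zero_iff_mem).mpr this, map_zero]
  · show χ (mk (AddMonoidAlgebra.single 0 1)) = 1
    rw [← AddMonoidAlgebra.one_def, hmk, Ideal.Quotient.mkₐ_eq_mk, map_one]
    exact hχ

/-- The cylinder set `{x ∈ X_f : x(0) = c}`. -/
def cyl (f : Rdp p d) (c : ZMod p) : Set (Xf f) := {x : Xf f | x.1 0 = c}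

lemma cyl_measurable (f : Rdp p d) (c : ZMod p) : MeasurableSet (cyl f c) := by
  have hcont : Continuous fun x : Xf f => x.1 0 :=
    (continuous_apply (0 : Fin d → ℤ)).comp continuous_subtype_val
  have : IsClosed (cyl f c) := IsClosed.preimage hcont (isClosed_discrete {c})
  exact this.measurableSet

lemma cyl_measure_eq (f : Rdp p d) (hnu : ¬ IsUnit f) (μ : Measure (Xf f))
    [μ.IsAddLeftInvariant] (a b : ZMod p) : μ (cyl f a) = μ (cyl f b) := by
  obtain ⟨x0, hx0⟩ := exists_one_elem f hnu
  set g : Xf f := (b - a).val • x0 with hgdef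
  have hg : g.1 0 = b - a := by
    have : (g : (Fin d → ℤ) → ZMod p) = (b - a).val • (x0 : (Fin d → ℤ) → ZMod p) := rfl
    rw [this]
    simp only [Pi.smul_apply, hx0, nsmul_eq_mul, mul_one]
    exact ZMod.natCast_rightInverse (b - a)
  have hset : (fun y : Xf f => g + y) ⁻¹' (cyl f b) = cyl f a := by
    ext y
    simp only [cyl, Set.mem_preimage, Set.mem_setOf_eq]
    have hco : ((g + y : Xf f) : (Fin d → ℤ) → ZMod p) 0 = g.1 0 + y.1 0 := rfl
    rw [hco, hg]
    constructor
    · intro h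
      have := congrArg (fun z => z - (b - a)) h
      simpa [sub_sub_cancel] using this
    · intro h
      rw [h]
      ring
  have hmeasf : Measurable fun y : Xf f => g + y :=
    (continuous_const.add continuous_id).measurable
  calc μ (cyl f a) = μ ((fun y : Xf f => g + y) ⁻¹' (cyl f b)) := by rw [hset]
    _ = (μ.map fun y : Xf f => g + y) (cyl f b) :=
        (Measure.map_apply hmeasf (cyl_measurable f b)).symm
    _ = μ (cyl f b) := by rw [map_add_left_eq_self μ g]

lemma cyl_measure_ne_zero (f : Rdp p d) (hnu : ¬ IsUnit f) (μ : Measure (Xf f))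
    [IsProbabilityMeasure μ] [μ.IsAddLeftInvariant] (c : ZMod p) : μ (cyl f c) ≠ 0 := by
  intro hzero
  have hall : ∀ a : ZMod p, μ (cyl f a) = 0 := fun a =>
    (cyl_measure_eq f hnu μ a c).trans hzero
  have huniv : (Set.univ : Set (Xf f)) = ⋃ a : ZMod p, cyl f a := by
    ext x
    simp only [Set.mem_univ, Set.mem_iUnion, true_iff]
    exact ⟨x.1 0, rfl⟩
  have : (1 : ENNReal) = μ (⋃ a : ZMod p, cyl f a) := by
    rw [← huniv, measure_univ]
  rw [measure_iUnion ?_ (fun a => cyl_measurable f a)] at this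
  · simp only [hall, tsum_zero] at this
    exact one_ne_zero this
  · intro a b hab
    simp only [Function.onFun, Set.disjoint_left]
    intro x hxa hxb
    exact hab (hxa.symm.trans hxb)

lemma nonmix_core (f : Rdp p d) {r : ℕ} (hr : r = f.coeff.support.card)
    (e : Fin r → (Fin d → ℤ)) (he : Function.Injective e)
    (hrange : Set.range e = (f.coeff.support : Set (Fin d → ℤ)))
    (a : Fin r → ZMod p) (hsum : ∑ i, f.coeff (e i) * a i = 1)
    (j : ℕ) (x : Xf f) :
    ¬ ∀ i, x.1 ((p ^ j) • e i) = a i := by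
  intro hx
  have h0 := key_rel f x.1 x.2 j 0
  have himg : f.coeff.support = Finset.univ.image e :=
    Finset.coe_injective (by rw [Finset.coe_image, Finset.coe_univ, Set.image_univ, hrange])
  rw [himg, Finset.sum_image (fun u _ v _ huv => he huv)] at h0
  simp only [zero_add] at h0
  rw [Finset.sum_congr rfl fun i _ => by rw [hx i]] at h0
  rw [hsum] at h0
  exact one_ne_zero h0

lemma exists_good_a (f : Rdp p d) {r : ℕ} (hr : r = f.coeff.support.card) (hcard : 2 ≤ f.coeff.support.card)
    (e : Fin r → (Fin d → ℤ))
    (hrange : Set.range e = (f.coeff.support : Set (Fin d → ℤ))) :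
    ∃ a : Fin r → ZMod p, ∑ i, f.coeff (e i) * a i = 1 := by
  have hrpos : 0 < r := by omega
  set i0 : Fin r := ⟨0, hrpos⟩
  have hne : f.coeff (e i0) ≠ 0 := by
    have : e i0 ∈ (f.coeff.support : Set (Fin d → ℤ)) := hrange ▸ Set.mem_range_self i0
    exact Finsupp.mem_support_iff.mp this
  refine ⟨fun i => if i = i0 then (f.coeff (e i0))⁻¹ else 0, ?_⟩
  rw [Finset.sum_eq_single_of_mem i0 (Finset.mem_univ _)]
  · simp only [if_pos rfl]
    exact mul_inv_cancel₀ hne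
  · intro b _ hb
    simp [hb]

lemma extend_inj {β : Type*} [Infinite β] {r s : ℕ} (hrs : r ≤ s) (e : Fin r → β)
    (he : Function.Injective e) :
    ∃ n : Fin s → β, Function.Injective n ∧
      ∀ i : Fin r, n ⟨i.1, lt_of_lt_of_le i.2 hrs⟩ = e i := by
  classical
  have hinf : (Set.range e)ᶜ.Infinite := Set.Finite.infinite_compl (Set.finite_range e)
  set g : ℕ ↪ ↥(Set.range e)ᶜ := Set.Infinite.natEmbedding _ hinf with hgdef
  refine ⟨fun i => if h : i.1 < r then e ⟨i.1, h⟩ else (g (i.1 - r) : β), ?_, ?_⟩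
  · intro i j hij
    dsimp only at hij
    by_cases hi : i.1 < r <;> by_cases hj : j.1 < r
    · rw [dif_pos hi, dif_pos hj] at hij
      have h1 : (⟨i.1, hi⟩ : Fin r) = ⟨j.1, hj⟩ := he hij
      have h2 : i.1 = j.1 := Fin.mk_eq_mk.mp h1
      exact Fin.ext h2
    · rw [dif_pos hi, dif_neg hj] at hij
      exact absurd (hij ▸ Set.mem_range_self (⟨i.1, hi⟩ : Fin r)) (g (j.1 - r)).2
    · rw [dif_neg hi, dif_pos hj] at hij
      exact absurd (hij.symm ▸ Set.mem_range_self (⟨j.1, hj⟩ : Fin r)) (g (i.1 - r)).2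
    · rw [dif_neg hi, dif_neg hj] at hij
      have h2 := g.injective (Subtype.coe_injective hij)
      exact Fin.ext (by omega)
  · intro i
    simp [i.2]

end NonMixAux

/-- For an irreducible `f ∈ R_{d,p}` with at least two monomials,
the support `S(f)` is a non-mixing shape for the algebraic `ℤ^d`-action `α_f`
associated to `R_{d,p}/⟨f⟩`; consequently `S(α_f) ≤ |S(f)| - 1`. -/
theorem support_is_nonmixing_shape
    {p d : ℕ} [Fact p.Prime] (hd : 1 ≤ d) (f : Rdp p d)
    (hirr : Irreducible f) (hcard : 2 ≤ f.coeff.support.card)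
    (μ : Measure (Xf f)) [IsProbabilityMeasure μ] [μ.IsAddLeftInvariant] :
    (∀ e : Fin f.coeff.support.card → (Fin d → ℤ), Function.Injective e →
      Set.range e = (f.coeff.support : Set (Fin d → ℤ)) →
        ¬ IsMixingShape μ (shiftAction f) e) ∧
    shapeMixingOrder μ (shiftAction f) ≤ ((f.coeff.support.card - 1 : ℕ) : ℕ∞) := by
  classical
  have hp : p.Prime := Fact.out
  have hnu : ¬ IsUnit f := hirr.not_isUnit
  have hpow : Tendsto (fun j : ℕ => p ^ j) atTop atTop :=
    tendsto_pow_atTop_atTop_of_one_lt hp.one_lt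
  have partA : ∀ e : Fin f.coeff.support.card → (Fin d → ℤ), Function.Injective e →
      Set.range e = (f.coeff.support : Set (Fin d → ℤ)) →
        ¬ IsMixingShape μ (shiftAction f) e := by
    intro e he hrange hmix
    obtain ⟨a, hsum⟩ := NonMixAux.exists_good_a f rfl hcard e hrange
    set A : Fin f.coeff.support.card → Set (Xf f) := fun i => NonMixAux.cyl f (a i) with hA
    have hmeas : ∀ i, MeasurableSet (A i) := fun i => NonMixAux.cyl_measurable f (a i)
    have h2 := (hmix A hmeas).comp hpow
    have hzero : ∀ j : ℕ,
        μ (⋂ i, shiftAction f (((p ^ j : ℕ) : ℤ) • e i) ⁻¹' A i) = 0 := by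
      intro j
      have hempty : (⋂ i, shiftAction f (((p ^ j : ℕ) : ℤ) • e i) ⁻¹' A i) = ∅ := by
        refine Set.eq_empty_iff_forall_notMem.mpr fun x hx => ?_
        refine NonMixAux.nonmix_core f rfl e he hrange a hsum j x fun i => ?_
        have hxi : x.1 (0 + ((p ^ j : ℕ) : ℤ) • e i) = a i := Set.mem_iInter.mp hx i
        rw [zero_add, natCast_zsmul] at hxi
        exact hxi
      rw [hempty, measure_empty]
    have h3 : Tendsto (fun _ : ℕ => (0 : ENNReal)) atTop (𝓝 (∏ i, μ (A i))) :=
      h2.congr hzero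
    have h4 : (∏ i, μ (A i)) = 0 := tendsto_nhds_unique h3 tendsto_const_nhds
    exact Finset.prod_ne_zero_iff.mpr
      (fun i _ => NonMixAux.cyl_measure_ne_zero f hnu μ (a i)) h4
  refine ⟨partA, ?_⟩
  apply sSup_le
  rintro z ⟨s, hs, rfl⟩
  simp only [Set.mem_setOf_eq] at hs
  rw [Nat.cast_le]
  by_contra hcon
  push_neg at hcon
  have hrs : f.coeff.support.card ≤ s := by omega
  set e : Fin f.coeff.support.card → (Fin d → ℤ) :=
    fun i => ((f.coeff.support.equivFin.symm i : { v // v ∈ f.coeff.support }) : Fin d → ℤ) with hedef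
  have he : Function.Injective e :=
    fun i j h => (f.coeff.support.equivFin.symm.injective (Subtype.ext h))
  have hrange : Set.range e = (f.coeff.support : Set (Fin d → ℤ)) := by
    ext v
    constructor
    · rintro ⟨i, rfl⟩
      exact (f.coeff.support.equivFin.symm i).2
    · intro hv
      exact ⟨f.coeff.support.equivFin ⟨v, hv⟩, by simp [hedef]⟩
  obtain ⟨a, hsum⟩ := NonMixAux.exists_good_a f rfl hcard e hrange
  have hinf : Infinite (Fin d → ℤ) :=
    Infinite.of_injective (fun z : ℤ => fun _ => z)
      (fun z w h => congrFun h ⟨0, hd⟩)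
  obtain ⟨n, hninj, hncast⟩ := NonMixAux.extend_inj hrs e he
  have hB := hs n hninj
  set B : Fin s → Set (Xf f) := fun i =>
    if h : i.1 < f.coeff.support.card then NonMixAux.cyl f (a ⟨i.1, h⟩) else Set.univ with hBdef
  have hmeasB : ∀ i, MeasurableSet (B i) := by
    intro i
    by_cases h : i.1 < f.coeff.support.card
    · rw [hBdef]
      simp only [dif_pos h]
      exact NonMixAux.cyl_measurable f _
    · rw [hBdef]
      simp only [dif_neg h]
      exact MeasurableSet.univ
  have h2 := (hB B hmeasB).comp hpow
  have hzero : ∀ j : ℕ,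
      μ (⋂ i, shiftAction f (((p ^ j : ℕ) : ℤ) • n i) ⁻¹' B i) = 0 := by
    intro j
    have hempty : (⋂ i, shiftAction f (((p ^ j : ℕ) : ℤ) • n i) ⁻¹' B i) = ∅ := by
      refine Set.eq_empty_iff_forall_notMem.mpr fun x hx => ?_
      refine NonMixAux.nonmix_core f rfl e he hrange a hsum j x fun i0 => ?_
      have hlt : (i0 : ℕ) < s := lt_of_lt_of_le i0.2 hrs
      have hxi := Set.mem_iInter.mp hx ⟨i0.1, hlt⟩
      have hBi : B ⟨i0.1, hlt⟩ = NonMixAux.cyl f (a i0) := by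
        rw [hBdef]
        simp only [dif_pos i0.2]
      have hni : n ⟨i0.1, hlt⟩ = e i0 := hncast i0
      rw [hBi, hni] at hxi
      have hxi' : x.1 (0 + ((p ^ j : ℕ) : ℤ) • e i0) = a i0 := hxi
      rw [zero_add, natCast_zsmul] at hxi'
      exact hxi'
    rw [hempty, measure_empty]
  have h3 : Tendsto (fun _ : ℕ => (0 : ENNReal)) atTop (𝓝 (∏ i, μ (B i))) :=
    h2.congr hzero
  have h4 : (∏ i, μ (B i)) = 0 := tendsto_nhds_unique h3 tendsto_const_nhds
  refine Finset.prod_ne_zero_iff.mpr (fun i _ => ?_) h4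
  by_cases h : i.1 < f.coeff.support.card
  · rw [hBdef]
    simp only [dif_pos h]
    exact NonMixAux.cyl_measure_ne_zero f hnu μ _
  · rw [hBdef]
    simp only [dif_neg h]
    rw [measure_univ]
    exact one_ne_zero
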